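/- For p, q > 1 and x ∈ (0,1), one has arsinh_{p,q}(x) > (x^p/(1+x^q))^{1/p} · (1 - q·x^q/(p(1+q)(1+x^q)))^{-1}. -/

import Mathlib

open Real Set

noncomputable def arsinhpq (p q x : ℝ) : ℝ :=
  ∫ t in (0:ℝ)..x, (1 + t ^ q) ^ (-1/p)

noncomputable def fI (p q t : ℝ) : ℝ := (1 + t ^ q) ^ (-1/p)

noncomputable def DD (p q y : ℝ) : ℝ := 1 - q * y ^ q / (p * (1 + q) * (1 + y ^ q))

noncomputable def GG (p q y : ℝ) : ℝ := arsinhpq p q y * DD p q y - y * fI p q y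

lemma hA_pos (q : ℝ) (t : ℝ) (ht : 0 ≤ t) : 0 < 1 + t ^ q :=
  add_pos_of_pos_of_nonneg one_pos (Real.rpow_nonneg ht q)

lemma hA_pos' (q : ℝ) (hq : 0 < q) (t : ℝ) (ht : t ∈ Ioo (-1:ℝ) 2) : 0 < 1 + t ^ q := by
  rcases le_or_gt 0 t with h | h
  · exact hA_pos q t h
  · have habs : |t ^ q| ≤ |t| ^ q := Real.abs_rpow_le_abs_rpow t q
    have h1 : |t| ^ q < 1 :=
      Real.rpow_lt_one (abs_nonneg t) (by rw [abs_of_neg h]; linarith [ht.1]) hq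
    have := (abs_lt.mp (lt_of_le_of_lt habs h1)).1
    linarith

lemma fI_contAt (p q : ℝ) (hq : 1 < q) (t : ℝ) (ht : t ∈ Ioo (-1:ℝ) 2) :
    ContinuousAt (fI p q) t := by
  have h1 : ContinuousAt (fun s : ℝ => 1 + s ^ q) t :=
    continuousAt_const.add (Real.continuousAt_rpow_const t q (Or.inr (by linarith)))
  exact h1.rpow_const (Or.inl (ne_of_gt (hA_pos' q (by linarith) t ht)))

lemma mem_Ioo' (y : ℝ) (h0 : 0 ≤ y) (h1 : y ≤ 1) : y ∈ Ioo (-1:ℝ) 2 :=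
  ⟨by linarith, by linarith⟩

lemma fI_int (p q : ℝ) (hq : 1 < q) (y : ℝ) (hy : 0 ≤ y) (hy1 : y ≤ 1) :
    IntervalIntegrable (fI p q) MeasureTheory.volume 0 y := by
  apply ContinuousOn.intervalIntegrable
  intro t ht
  rw [uIcc_of_le hy] at ht
  exact (fI_contAt p q hq t (mem_Ioo' t ht.1 (le_trans ht.2 hy1))).continuousWithinAt

lemma arsinh_hasDeriv (p q : ℝ) (hq : 1 < q) (y : ℝ) (hy : 0 ≤ y) (hy1 : y ≤ 1) :
    HasDerivAt (arsinhpq p q) (fI p q y) y := by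
  have hm : StronglyMeasurableAtFilter (fI p q) (nhds y) MeasureTheory.volume :=
    ContinuousAt.stronglyMeasurableAtFilter isOpen_Ioo
      (fun t ht => fI_contAt p q hq t ht) y (mem_Ioo' y hy hy1)
  exact intervalIntegral.integral_hasDerivAt_right (fI_int p q hq y hy hy1) hm
    (fI_contAt p q hq y (mem_Ioo' y hy hy1))

lemma fI_le_one (p q : ℝ) (hp : 1 < p) (t : ℝ) (ht : 0 ≤ t) : fI p q t ≤ 1 := by
  apply Real.rpow_le_one_of_one_le_of_nonpos
  · nlinarith [Real.rpow_nonneg ht q]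
  · rw [neg_div]
    have : 0 < p := by linarith
    have : 0 ≤ 1 / p := by positivity
    linarith

lemma fI_pos (p q : ℝ) (t : ℝ) (ht : 0 ≤ t) : 0 < fI p q t :=
  Real.rpow_pos_of_pos (hA_pos q t ht) _

lemma arsinh_le (p q : ℝ) (hp : 1 < p) (hq : 1 < q) (y : ℝ) (hy : 0 ≤ y) (hy1 : y ≤ 1) :
    arsinhpq p q y ≤ y := by
  have h := intervalIntegral.integral_mono_on (μ := MeasureTheory.volume) hy
    (fI_int p q hq y hy hy1) (intervalIntegrable_const (c := (1:ℝ)))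
    (fun t ht => fI_le_one p q hp t ht.1)
  simpa [arsinhpq, fI] using h

lemma GG_hasDeriv (p q : ℝ) (hp : 1 < p) (hq : 1 < q) (y : ℝ) (hy : 0 < y) (hy1 : y ≤ 1) :
    HasDerivAt (GG p q)
      (q^2 * y ^ (q-1) / (p * (1+q) * (1 + y^q)^2) *
        (y * (1 + y^q) * fI p q y - arsinhpq p q y)) y := by
  have hp0 : (0:ℝ) < p := by linarith
  have hA : 0 < 1 + y^q := hA_pos q y hy.le
  have h1 : HasDerivAt (fun t : ℝ => t ^ q) (q * y ^ (q-1)) y :=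
    Real.hasDerivAt_rpow_const (Or.inr hq.le)
  have hA' : HasDerivAt (fun t : ℝ => 1 + t ^ q) (q * y ^ (q-1)) y := h1.const_add 1
  have hfd : HasDerivAt (fI p q) ((q * y ^ (q-1)) * (-1/p) * (1 + y^q) ^ (-1/p - 1)) y :=
    hA'.rpow_const (Or.inl (ne_of_gt hA))
  have hNd : HasDerivAt (fun t : ℝ => q * t ^ q) (q * (q * y^(q-1))) y := h1.const_mul q
  have hMd : HasDerivAt (fun t : ℝ => p*(1+q)*(1+t^q)) (p*(1+q)*(q*y^(q-1))) y :=
    hA'.const_mul (p*(1+q))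
  have hM0 : p*(1+q)*(1+y^q) ≠ 0 :=
    ne_of_gt (mul_pos (mul_pos hp0 (by linarith)) hA)
  have hDd : HasDerivAt (DD p q)
      (-((q*(q*y^(q-1)) * (p*(1+q)*(1+y^q)) - q*y^q * (p*(1+q)*(q*y^(q-1)))) /
        (p*(1+q)*(1+y^q))^2)) y := (hNd.div hMd hM0).const_sub 1
  have hFd := arsinh_hasDeriv p q hq y hy.le hy1
  have hmul : HasDerivAt (fun t => t * fI p q t)
      (1 * fI p q y + y * ((q * y ^ (q-1)) * (-1/p) * (1 + y^q) ^ (-1/p - 1))) y :=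
    (hasDerivAt_id y).mul hfd
  have hG := (hFd.mul hDd).sub hmul
  replace hG : HasDerivAt (GG p q) _ y := hG
  convert hG using 1
  have e1 : (1 + y^q) ^ (-1/p - 1) = (1 + y^q) ^ (-1/p) / (1 + y^q) := by
    rw [Real.rpow_sub hA, Real.rpow_one]
  have e2 : y * y ^ (q-1) = y ^ q := by
    nth_rewrite 1 [← Real.rpow_one y]
    rw [← Real.rpow_add hy]; norm_num
  simp only [fI, DD]
  rw [e1, ← e2]
  have hA2 : (0:ℝ) < 1 + y * y ^ (q-1) := by rw [e2]; exact hA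
  field_simp
  ring

lemma DD_contAt (p q : ℝ) (hp : 1 < p) (hq : 1 < q) (y : ℝ) (hy : 0 ≤ y) :
    ContinuousAt (DD p q) y := by
  have hp0 : (0:ℝ) < p := by linarith
  have hA := hA_pos q y hy
  have hr : ContinuousAt (fun t : ℝ => t ^ q) y :=
    Real.continuousAt_rpow_const y q (Or.inr (by linarith))
  exact continuousAt_const.sub (((continuousAt_const.mul hr)).div
    (continuousAt_const.mul (continuousAt_const.add hr))
    (ne_of_gt (mul_pos (mul_pos hp0 (by linarith)) hA)))

lemma GG_pos (p q x : ℝ) (hp : 1 < p) (hq : 1 < q) (hx : x ∈ Ioo (0:ℝ) 1) :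
    0 < GG p q x := by
  obtain ⟨hx0, hx1⟩ := hx
  have hstrict : StrictMonoOn (GG p q) (Icc 0 x) := by
    apply strictMonoOn_of_deriv_pos (convex_Icc 0 x)
    · intro y hy
      have hy1 : y ≤ 1 := le_trans hy.2 hx1.le
      exact (((arsinh_hasDeriv p q hq y hy.1 hy1).continuousAt.mul
        (DD_contAt p q hp hq y hy.1)).sub
        (continuousAt_id.mul (fI_contAt p q hq y (mem_Ioo' y hy.1 hy1)))).continuousWithinAt
    · intro y hy
      rw [interior_Icc] at hy
      have hy0 := hy.1
      have hy1 : y ≤ 1 := le_trans hy.2.le hx1.le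
      rw [(GG_hasDeriv p q hp hq y hy0 hy1).deriv]
      have hA := hA_pos q y hy0.le
      have hyq : 0 < y ^ q := Real.rpow_pos_of_pos hy0 q
      have hw : 0 < y ^ (q-1) := Real.rpow_pos_of_pos hy0 _
      have hfy := fI_pos p q y hy0.le
      apply mul_pos
      · have : (0:ℝ) < p * (1+q) * (1+y^q)^2 := by positivity
        positivity
      · have hF := arsinh_le p q hp hq y hy0.le hy1
        have hone : 1 < (1 + y^q) * fI p q y := by
          have he : (1 + y^q) * fI p q y = (1 + y^q) ^ (1 - 1/p) := by
            rw [fI, show (1:ℝ) - 1/p = 1 + (-1/p) by ring, Real.rpow_add hA, Real.rpow_one]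
          have h1p : 1/p < 1 := by
            rw [div_lt_one (by linarith : (0:ℝ) < p)]; exact hp
          rw [he]
          exact (Real.one_lt_rpow_iff_of_pos hA).mpr
            (Or.inl ⟨by linarith, by linarith⟩)
        nlinarith [mul_lt_mul_of_pos_left hone hy0]
  have hG0 : GG p q 0 = 0 := by
    simp [GG, arsinhpq, intervalIntegral.integral_same]
  have := hstrict ⟨le_refl 0, hx0.le⟩ ⟨hx0.le, le_refl x⟩ hx0
  rw [hG0] at this
  exact this

theorem stmt4 (p q x : ℝ) (hp : 1 < p) (hq : 1 < q) (hx : x ∈ Ioo (0:ℝ) 1) :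
    (x ^ p / (1 + x ^ q)) ^ (1/p) *
      (1 - q * x ^ q / (p * (1 + q) * (1 + x ^ q)))⁻¹ < arsinhpq p q x := by
  obtain ⟨hx0, hx1⟩ := hx
  have hp0 : (0:ℝ) < p := by linarith
  have hAx : 0 < 1 + x ^ q := hA_pos q x hx0.le
  have hxq1 : x ^ q < 1 := Real.rpow_lt_one hx0.le hx1 (by linarith)
  have hxq0 : 0 < x ^ q := Real.rpow_pos_of_pos hx0 q
  have hDpos : 0 < DD p q x := by
    rw [DD, sub_pos, div_lt_one (by positivity)]
    have h1 : q * x ^ q < q := by nlinarith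
    have h3 : (1+q) < p * (1+q) := by nlinarith
    have h4 : 0 ≤ p * (1+q) * (x ^ q) := by positivity
    nlinarith
  have hL : (x ^ p / (1 + x ^ q)) ^ (1/p) = x * fI p q x := by
    rw [Real.div_rpow (Real.rpow_nonneg hx0.le p) hAx.le,
      ← Real.rpow_mul hx0.le, mul_one_div, div_self (ne_of_gt hp0), Real.rpow_one,
      fI, neg_div, Real.rpow_neg hAx.le, div_eq_mul_inv]
  have hDD : (1 - q * x ^ q / (p * (1 + q) * (1 + x ^ q))) = DD p q x := rfl
  rw [hL, hDD, ← div_eq_mul_inv, div_lt_iff₀ hDpos]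
  have hGx := GG_pos p q x hp hq ⟨hx0, hx1⟩
  have : GG p q x = arsinhpq p q x * DD p q x - x * fI p q x := rfl
  linarith [this ▸ hGx]
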